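/- For a function f : ℕ → ℝ, the following are equivalent: (i) for every k ∈ ℕ there exists n₀ such that |f(n)| ≤ n^{−k} for all n ≥ n₀ (f is negligible); (ii) d(f, 0) = 0, where 0 denotes the zero function. -/

import Mathlib

open Filter

/-- The pseudometric of asymptotic exponent. -/
noncomputable def pd (f g : ℕ → ℝ) : ENNReal :=
  Filter.limsup
    (fun n : ℕ =>
      if f n = g n then 0
      else ENNReal.ofReal (Real.exp (Real.log |f n - g n| / Real.log n)))
    Filter.atTop

/-- `f` is negligible if it is eventually bounded by every inverse polynomial. -/
def Negligible (f : ℕ → ℝ) : Prop :=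
  ∀ k : ℕ, ∃ n₀ : ℕ, ∀ n ≥ n₀, |f n| ≤ ((n : ℝ) ^ k)⁻¹

/-- A function is negligible if and only if its pseudometric distance to the zero
function vanishes. -/
theorem negligible_iff_pd_zero (f : ℕ → ℝ) :
    Negligible f ↔ pd f (fun _ => 0) = 0 := by
  constructor
  · intro hneg
    have key : ∀ k : ℕ, pd f (fun _ => 0) ≤ ENNReal.ofReal (Real.exp (-(k : ℝ))) := by
      intro k
      obtain ⟨n₀, hn₀⟩ := hneg k
      apply Filter.limsup_le_of_le (by isBoundedDefault)
      filter_upwards [eventually_ge_atTop (max n₀ 2)] with n hn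
      have hn2 : (2 : ℕ) ≤ n := le_trans (le_max_right _ _) hn
      have hfn : |f n| ≤ ((n : ℝ) ^ k)⁻¹ := hn₀ n (le_trans (le_max_left _ _) hn)
      by_cases hz : f n = (fun _ => (0 : ℝ)) n
      · simp [hz]
      · rw [if_neg hz]
        simp only at hz
        have hfpos : 0 < |f n| := abs_pos.mpr hz
        have hn1 : (1 : ℝ) < (n : ℝ) := by exact_mod_cast lt_of_lt_of_le one_lt_two hn2
        have hlogn : 0 < Real.log n := Real.log_pos hn1
        have hlog : Real.log |f n| ≤ -(k * Real.log n) := by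
          have := Real.log_le_log hfpos hfn
          rwa [Real.log_inv, Real.log_pow] at this
        have hq : Real.log |f n - 0| / Real.log n ≤ -(k : ℝ) := by
          rw [sub_zero, div_le_iff₀ hlogn]
          linarith
        exact ENNReal.ofReal_le_ofReal (Real.exp_le_exp.mpr hq)
    have htend : Filter.Tendsto (fun k : ℕ => ENNReal.ofReal (Real.exp (-(k : ℝ))))
        atTop (nhds 0) := by
      have h1 : Filter.Tendsto (fun k : ℕ => Real.exp (-(k : ℝ))) atTop (nhds 0) :=
        Real.tendsto_exp_atBot.comp
          (tendsto_neg_atTop_atBot.comp tendsto_natCast_atTop_atTop)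
      simpa using (ENNReal.tendsto_ofReal h1)
    have := ge_of_tendsto' htend key
    exact le_antisymm this zero_le
  · intro hpd k
    have hpos : (0 : ENNReal) < ENNReal.ofReal (Real.exp (-(k : ℝ))) :=
      ENNReal.ofReal_pos.mpr (Real.exp_pos _)
    have hlt : pd f (fun _ => 0) < ENNReal.ofReal (Real.exp (-(k : ℝ))) := by
      rw [hpd]; exact hpos
    have hev := Filter.eventually_lt_of_limsup_lt hlt
    rw [Filter.eventually_atTop] at hev
    obtain ⟨m, hm⟩ := hev
    refine ⟨max m 2, fun n hn => ?_⟩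
    have hnm : m ≤ n := le_trans (le_max_left _ _) hn
    have hn2 : (2 : ℕ) ≤ n := le_trans (le_max_right _ _) hn
    have hn1 : (1 : ℝ) < (n : ℝ) := by exact_mod_cast lt_of_lt_of_le one_lt_two hn2
    have hlogn : 0 < Real.log n := Real.log_pos hn1
    have h := hm n hnm
    by_cases hz : f n = 0
    · simp [hz]
    · rw [if_neg hz] at h
      have hfpos : 0 < |f n| := abs_pos.mpr hz
      have hexp : Real.exp (Real.log |f n - 0| / Real.log n) < Real.exp (-(k : ℝ)) :=
        (ENNReal.ofReal_lt_ofReal_iff (Real.exp_pos _)).mp h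
      have hq : Real.log |f n| / Real.log n < -(k : ℝ) := by
        rw [sub_zero] at hexp
        exact Real.exp_lt_exp.mp hexp
      have hlog : Real.log |f n| < -(k * Real.log n) := by
        rw [div_lt_iff₀ hlogn] at hq
        linarith
      have heq : Real.exp (-(k * Real.log n)) = ((n : ℝ) ^ k)⁻¹ := by
        rw [← Real.log_pow, ← Real.log_inv, Real.exp_log (by positivity)]
      have : |f n| < ((n : ℝ) ^ k)⁻¹ := by
        calc |f n| = Real.exp (Real.log |f n|) := (Real.exp_log hfpos).symm
          _ < Real.exp (-(k * Real.log n)) := Real.exp_lt_exp.mpr hlog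
          _ = ((n : ℝ) ^ k)⁻¹ := heq
      exact this.le
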